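/- arXiv:2101.00975 — 5 statements merged into one kernel-verified Lean document; each statement's English description precedes it below -/
import Mathlib

section
/- Let n and x be positive integers with 4x > n, and suppose 4x - n = y₁ + z₁ where y₁ and z₁ are positive integers each dividing n·x. Then there exist positive integers y, z with 4/n = 1/x + 1/y + 1/z. -/
theorem stmt_4 (n x y₁ z₁ : ℕ) (hn : 0 < n) (hx : 0 < x)
    (hy₁ : 0 < y₁) (hz₁ : 0 < z₁)
    (hgt : n < 4 * x) (hsum : 4 * x - n = y₁ + z₁)
    (hdy : y₁ ∣ n * x) (hdz : z₁ ∣ n * x) :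
    ∃ y z : ℕ, 0 < y ∧ 0 < z ∧ (4 : ℚ) / n = 1 / x + 1 / y + 1 / z := by
  obtain ⟨a, ha⟩ := hdy
  obtain ⟨b, hb⟩ := hdz
  have hnx : 0 < n * x := Nat.mul_pos hn hx
  have hapos : 0 < a := by
    rcases Nat.eq_zero_or_pos a with h | h
    · simp [h] at ha; omega
    · exact h
  have hbpos : 0 < b := by
    rcases Nat.eq_zero_or_pos b with h | h
    · simp [h] at hb; omega
    · exact h
  refine ⟨a, b, hapos, hbpos, ?_⟩
  have hkey : y₁ + z₁ + n = 4 * x := by omega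
  have hq : (y₁ : ℚ) + z₁ + n = 4 * x := by exact_mod_cast congrArg (Nat.cast : ℕ → ℚ) hkey
  have haq : (n : ℚ) * x = y₁ * a := by exact_mod_cast ha
  have hbq : (n : ℚ) * x = z₁ * b := by exact_mod_cast hb
  have hn' : (n : ℚ) ≠ 0 := by positivity
  have hx' : (x : ℚ) ≠ 0 := by positivity
  have ha' : (a : ℚ) ≠ 0 := by positivity
  have hb' : (b : ℚ) ≠ 0 := by positivity
  field_simp
  linear_combination -(a:ℚ)*b*hq - b*haq - a*hbq
end

section
/- For every natural number l ≥ 1, 4/(24l-7) = 1/(6l-1) + 1/(2l(6l-1)(24l-7)) + 1/(2l(24l-7)); hence the Erdős–Straus equation has a solution for all n ≡ 17 (mod 24). -/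
lemma key (l : ℕ) (hl : 1 ≤ l) :
    (4 : ℚ) / (24 * l - 7) =
      1 / (6 * l - 1) + 1 / (2 * l * (6 * l - 1) * (24 * l - 7))
        + 1 / (2 * l * (24 * l - 7)) := by
  have hl' : (1 : ℚ) ≤ (l : ℚ) := by exact_mod_cast hl
  have h1 : (24 * (l : ℚ) - 7) ≠ 0 := by nlinarith
  have h2 : (6 * (l : ℚ) - 1) ≠ 0 := by nlinarith
  have h3 : (l : ℚ) ≠ 0 := by nlinarith
  rw [div_add_div _ _ h2 (by simp [h1, h2, h3]), div_add_div _ _ (by simp [h1, h2, h3]) (by simp [h1, h3]), div_eq_div_iff h1 (by simp [h1, h2, h3])]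
  ring

theorem stmt_7 (l : ℕ) (hl : 1 ≤ l) :
    (4 : ℚ) / (24 * l - 7) =
      1 / (6 * l - 1) + 1 / (2 * l * (6 * l - 1) * (24 * l - 7))
        + 1 / (2 * l * (24 * l - 7)) ∧
    ∀ n : ℕ, 0 < n → n % 24 = 17 →
      ∃ x y z : ℕ, 0 < x ∧ 0 < y ∧ 0 < z ∧
        (4 : ℚ) / n = 1 / x + 1 / y + 1 / z := by
  refine ⟨key l hl, fun n hn hmod => ?_⟩
  set m := n / 24 + 1 with hm
  have hL : 1 ≤ m := by omega
  have hn24 : n = 24 * m - 7 := by omega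
  refine ⟨6 * m - 1, 2 * m * (6 * m - 1) * (24 * m - 7), 2 * m * (24 * m - 7), ?_, ?_, ?_, ?_⟩
  · omega
  · have : 1 ≤ 6 * m - 1 := by omega
    have : 1 ≤ 24 * m - 7 := by omega
    positivity
  · have : 1 ≤ 24 * m - 7 := by omega
    positivity
  · have h := key m hL
    have c1 : ((n : ℚ)) = 24 * m - 7 := by
      rw [hn24]; push_cast [Nat.cast_sub (by omega : 7 ≤ 24 * m)]; ring
    have c2 : ((6 * m - 1 : ℕ) : ℚ) = 6 * m - 1 := by
      push_cast [Nat.cast_sub (by omega : 1 ≤ 6 * m)]; ring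
    have c3 : ((24 * m - 7 : ℕ) : ℚ) = 24 * m - 7 := by
      push_cast [Nat.cast_sub (by omega : 7 ≤ 24 * m)]; ring
    push_cast [c2, c3]
    rw [c1, h]
end

section
/- Let l, b be positive integers and suppose 3b+2 divides (6l+1)(24l+1), say (6l+1)(24l+1) = f·(3b+2). Then 4/(24l+1) = 1/(6l+1) + 1/((3b+2)(b+1)f) + 1/((b+1)f); in particular the Erdős–Straus equation has a solution for n = 24l+1 whenever 6l+1 or 24l+1 has a divisor congruent to 2 mod 3 of the form 3b+2 with b ≥ 1. -/
theorem stmt_8 (l b f : ℕ) (hl : 1 ≤ l) (hb : 1 ≤ b)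
    (hf : (6 * l + 1) * (24 * l + 1) = f * (3 * b + 2)) :
    (4 : ℚ) / (24 * l + 1) =
      1 / (6 * l + 1) + 1 / ((3 * b + 2) * (b + 1) * f) + 1 / ((b + 1) * f) ∧
    ∃ x y z : ℕ, 0 < x ∧ 0 < y ∧ 0 < z ∧
      (4 : ℚ) / (24 * l + 1) = 1 / x + 1 / y + 1 / z := by
  have hfpos : 0 < f := by
    rcases Nat.eq_zero_or_pos f with h | h
    · simp [h] at hf
    · exact h
  have hfq : (6 * (l : ℚ) + 1) * (24 * (l : ℚ) + 1) = (f : ℚ) * (3 * (b : ℚ) + 2) := by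
    exact_mod_cast congrArg (Nat.cast (R := ℚ)) hf
  have h1 : (24 * (l : ℚ) + 1) ≠ 0 := by positivity
  have h2 : (6 * (l : ℚ) + 1) ≠ 0 := by positivity
  have h3 : (3 * (b : ℚ) + 2) ≠ 0 := by positivity
  have h4 : ((b : ℚ) + 1) ≠ 0 := by positivity
  have h5 : (f : ℚ) ≠ 0 := by exact_mod_cast hfpos.ne'
  have key : (4 : ℚ) / (24 * (l : ℚ) + 1) =
      1 / (6 * l + 1) + 1 / ((3 * b + 2) * (b + 1) * f) + 1 / ((b + 1) * f) := by
    calc (4 : ℚ) / (24 * (l : ℚ) + 1)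
        = 1 / (6 * (l : ℚ) + 1) + 3 / ((6 * (l : ℚ) + 1) * (24 * (l : ℚ) + 1)) := by
          field_simp; ring
      _ = 1 / (6 * (l : ℚ) + 1) + 3 / ((f : ℚ) * (3 * (b : ℚ) + 2)) := by rw [hfq]
      _ = 1 / (6 * l + 1) + 1 / ((3 * b + 2) * (b + 1) * f) + 1 / ((b + 1) * f) := by
          field_simp; ring
  refine ⟨key, ⟨6 * l + 1, (3 * b + 2) * (b + 1) * f, (b + 1) * f,
    by positivity, by positivity, by positivity, by push_cast; exact key⟩⟩
end

section
/- For every positive integer b, 4/(120b-23) = 1/(30b-5) + 1/(10(120b-23)(6b-1)) + 1/(2(120b-23)(6b-1)); hence the Erdős–Straus equation has a solution for all n ≡ 97 (mod 120). -/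
theorem stmt_16 (b : ℕ) (hb : 1 ≤ b) :
    (4 : ℚ) / (120 * b - 23) =
      1 / (30 * b - 5) + 1 / (10 * (120 * b - 23) * (6 * b - 1))
        + 1 / (2 * (120 * b - 23) * (6 * b - 1)) ∧
    ∀ n : ℕ, 0 < n → n % 120 = 97 →
      ∃ x y z : ℕ, 0 < x ∧ 0 < y ∧ 0 < z ∧
        (4 : ℚ) / n = 1 / x + 1 / y + 1 / z := by
  constructor
  · have hq : (1 : ℚ) ≤ (b : ℚ) := by exact_mod_cast hb
    have h1 : (120 : ℚ) * b - 23 ≠ 0 := by nlinarith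
    have h2 : (30 : ℚ) * b - 5 ≠ 0 := by nlinarith
    have h3 : (6 : ℚ) * b - 1 ≠ 0 := by nlinarith
    rw [div_add_div _ _ h2 (by positivity), div_add_div _ _ (by positivity) (by positivity), div_eq_div_iff h1 (by positivity)]
    ring
  · intro n hn hmod
    obtain ⟨k, hk⟩ : ∃ k, n = 120 * k + 97 := ⟨n / 120, by omega⟩
    refine ⟨30 * k + 25, 10 * n * (6 * k + 5), 2 * n * (6 * k + 5), by omega,
      by positivity, by positivity, ?_⟩
    subst hk
    have h1 : ((120 : ℚ) * k + 97) ≠ 0 := by positivity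
    have h2 : ((30 : ℚ) * k + 25) ≠ 0 := by positivity
    have h3 : ((6 : ℚ) * k + 5) ≠ 0 := by positivity
    push_cast
    field_simp
    ring
end

section
/- Let p be an odd prime and let u₅, v₄, w₂, w₃, w₄ be positive integers satisfying u₅·v₄ = w₃·w₂, u₅ + v₄ = w₄·w₂, and p = 4w₃ - w₄ > 0. Then 4/p = 1/(u₅·p) + 1/(v₄·p) + 1/w₃, i.e., x = u₅p, y = v₄p, z = w₃ solve the Erdős–Straus equation for n = p. -/
theorem stmt_18 (p u₅ v₄ w₂ w₃ w₄ : ℕ)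
    (hp : p.Prime) (hodd : Odd p)
    (hu : 0 < u₅) (hv : 0 < v₄) (hw₂ : 0 < w₂) (hw₃ : 0 < w₃) (hw₄ : 0 < w₄)
    (h1 : u₅ * v₄ = w₃ * w₂) (h2 : u₅ + v₄ = w₄ * w₂)
    (h3 : w₄ < 4 * w₃) (h4 : p = 4 * w₃ - w₄) :
    (4 : ℚ) / p = 1 / (u₅ * p) + 1 / (v₄ * p) + 1 / w₃ := by
  have e1 : (u₅:ℚ) * v₄ = w₃ * w₂ := by exact_mod_cast h1
  have e2 : (u₅:ℚ) + v₄ = w₄ * w₂ := by exact_mod_cast h2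
  have e4 : (4:ℚ) * w₃ - p = w₄ := by
    have : p + w₄ = 4 * w₃ := by omega
    have := congrArg (Nat.cast : ℕ → ℚ) this
    push_cast at this
    linarith
  have hpq : ((p:ℚ)) ≠ 0 := by exact_mod_cast hp.pos.ne'
  have huq : ((u₅:ℚ)) ≠ 0 := by exact_mod_cast hu.ne'
  have hvq : ((v₄:ℚ)) ≠ 0 := by exact_mod_cast hv.ne'
  have hwq : ((w₃:ℚ)) ≠ 0 := by exact_mod_cast hw₃.ne'
  field_simp
  ring_nf
  linear_combination ((w₄:ℚ) * e1 - w₃ * e2 + (u₅:ℚ) * v₄ * e4)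
end
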